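/- With the sequences of the construction above, for all k ≥ 1, q_k < b'_k < (q_k)^3 and q'_k < b_{k+1} < (q'_k)^3. -/
import Mathlib

private lemma aux_lower (x v w : ℤ) (hx : 3 ≤ x) (hw : 1 ≤ w)
    (hv : v ≤ (x ^ 3 - 1) * x + 1) : v < x ^ 6 + w - 1 := by
  have h2 : 9 ≤ x ^ 2 := by nlinarith
  have h4 : 1 ≤ x ^ 4 := by
    have := pow_pos (show (0:ℤ) < x by linarith) 4; linarith
  have h6 : x ^ 6 = x ^ 4 * x ^ 2 := by ring
  have h9 : x ^ 4 * 9 ≤ x ^ 4 * x ^ 2 := by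
    apply mul_le_mul_of_nonneg_left h2 (by positivity)
  nlinarith

private lemma aux_upper (x u c : ℤ) (hx : 3 ≤ x) (hu : u < x)
    (h3 : (x ^ 2 + x + 1) ^ 3 ≤ c) : x ^ 6 + u - 1 < c := by
  have hexp : (x ^ 2 + x + 1) ^ 3
      = x ^ 6 + 3 * x ^ 5 + 6 * x ^ 4 + 7 * x ^ 3 + 6 * x ^ 2 + 3 * x + 1 := by ring
  have h5 : 0 ≤ x ^ 5 := by positivity
  have h4 : 0 ≤ x ^ 4 := by positivity
  have h3' : 0 ≤ x ^ 3 := by positivity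
  have h2 : 0 ≤ x ^ 2 := by positivity
  linarith

set_option maxHeartbeats 1000000 in
theorem construction_b_bounds (a a' b b' q q' : ℕ → ℤ)
    (hq0 : q 0 = 1) (hq1 : q 1 = 3) (hq'0 : q' 0 = 1) (hq'1 : q' 1 = 28) (hb'1 : b' 1 = 9)
    (ha : ∀ k, 1 ≤ k → a (k + 1) = ((q k) ^ 6 + q (k - 1) - 1) * b' k + (q k) ^ 5)
    (hq : ∀ k, 1 ≤ k → q (k + 1) = a (k + 1) * q k + q (k - 1))
    (hb : ∀ k, 1 ≤ k → b (k + 1) = (q k) ^ 6 + q (k - 1) - 1)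
    (ha' : ∀ k, 1 ≤ k → a' (k + 1) = ((q' k) ^ 6 + q' (k - 1) - 1) * b (k + 1) + (q' k) ^ 5)
    (hq' : ∀ k, 1 ≤ k → q' (k + 1) = a' (k + 1) * q' k + q' (k - 1))
    (hb' : ∀ k, 1 ≤ k → b' (k + 1) = (q' k) ^ 6 + q' (k - 1) - 1) :
    ∀ k, 1 ≤ k → q k < b' k ∧ b' k < (q k) ^ 3 ∧ q' k < b (k + 1) ∧ b (k + 1) < (q' k) ^ 3 := by
  have key : ∀ k, 1 ≤ k →
      (3 ≤ q k ∧ q (k-1) < q k ∧ 1 ≤ q (k-1)) ∧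
      (3 ≤ q' k ∧ q' (k-1) < q' k ∧ 1 ≤ q' (k-1)) ∧
      (q' k = b' k * q k + 1 ∧ q (k+1) = b (k+1) * q' k + 1) ∧
      (q k < b' k ∧ b' k < q k ^ 3 ∧ q' k < b (k+1) ∧ b (k+1) < q' k ^ 3) := by
    intro k hk
    induction k, hk using Nat.le_induction with
    | base =>
      have hb2 : b 2 = 729 := by
        have := hb 1 le_rfl; simp [hq1, hq0] at this; norm_num at this ⊢; linarith
      have ha2 : a 2 = 6804 := by
        have := ha 1 le_rfl; simp [hq1, hq0, hb'1] at this; norm_num at this ⊢; linarith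
      have hq2 : q 2 = 20413 := by
        have := hq 1 le_rfl; simp [hq1, hq0, ha2] at this; norm_num at this ⊢; linarith
      refine ⟨⟨?_, ?_, ?_⟩, ⟨?_, ?_, ?_⟩, ⟨?_, ?_⟩, ?_, ?_, ?_, ?_⟩ <;>
        simp [hq0, hq1, hq'0, hq'1, hb'1, hb2, hq2] <;> norm_num
    | succ k hk ih =>
      obtain ⟨⟨A1, A2, A3⟩, ⟨B1, B2, B3⟩, ⟨C1, C2⟩, D1, D2, D3, D4⟩ := ih
      simp only [Nat.add_sub_cancel] at *
      -- defining equations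
      have eb' : b' (k+1) = q' k ^ 6 + q' (k-1) - 1 := hb' k hk
      have eb2 : b (k+2) = q (k+1) ^ 6 + q k - 1 := by
        have := hb (k+1) (by omega); simpa using this
      -- new C1 : q' (k+1) = b' (k+1) * q (k+1) + 1
      have nC1 : q' (k+1) = b' (k+1) * q (k+1) + 1 := by
        have e1 : q' (k+1) = ((q' k ^ 6 + q' (k-1) - 1) * b (k+1) + q' k ^ 5) * q' k
            + q' (k-1) := by
          rw [hq' k hk, ha' k hk]
        rw [e1, eb', C2]; ring
      -- new C2 : q (k+2) = b (k+2) * q' (k+1) + 1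
      have nC2 : q (k+2) = b (k+2) * q' (k+1) + 1 := by
        have e1 : q (k+2) = ((q (k+1) ^ 6 + q k - 1) * b' (k+1) + q (k+1) ^ 5) * q (k+1)
            + q k := by
          have h1 := hq (k+1) (by omega)
          have h2 := ha (k+1) (by omega)
          simp only [Nat.add_sub_cancel] at h1 h2
          rw [h1, h2]
        rw [e1, eb2, nC1]; ring
      -- basic positivity facts
      have hqk1 : q (k+1) = b (k+1) * q' k + 1 := C2
      have hbpos : q' k + 1 ≤ b (k+1) := by linarith
      have nA1 : 3 ≤ q (k+1) := by
        rw [hqk1]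
        have h1 : (4:ℤ) * 3 ≤ b (k+1) * q' k :=
          mul_le_mul (by linarith) (by linarith) (by norm_num) (by linarith)
        linarith
      have hq'gt : q k < q' k := by
        rw [C1]
        have h1 : 1 * q k ≤ b' k * q k :=
          mul_le_mul_of_nonneg_right (by linarith) (by linarith)
        linarith
      have nA2 : q k < q (k+1) := by
        rw [hqk1]
        have h1 : 1 * q' k ≤ b (k+1) * q' k :=
          mul_le_mul_of_nonneg_right (by linarith) (by linarith)
        linarith
      have hb'big : q' k ≤ b' (k+1) := by
        have h1 : q' k ≤ q' k ^ 6 := le_self_pow₀ (by linarith) (by norm_num)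
        rw [eb']; linarith
      have nB1 : 3 ≤ q' (k+1) := by
        rw [nC1]
        have h1 : (3:ℤ) * 1 ≤ b' (k+1) * q (k+1) :=
          mul_le_mul (by linarith) (by linarith) (by norm_num) (by linarith)
        linarith
      have nB2 : q' k < q' (k+1) := by
        rw [nC1]
        have h1 : q' k * 1 ≤ b' (k+1) * q (k+1) :=
          mul_le_mul hb'big (by linarith) (by norm_num) (by linarith)
        linarith
      have hq'k2 : q' k ^ 2 + q' k + 1 ≤ q (k+1) := by
        rw [hqk1]
        have h1 : (q' k + 1) * q' k ≤ b (k+1) * q' k :=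
          mul_le_mul_of_nonneg_right hbpos (by linarith)
        have e : (q' k + 1) * q' k = q' k ^ 2 + q' k := by ring
        linarith
      -- D1 : q (k+1) < b' (k+1)
      have nD1 : q (k+1) < b' (k+1) := by
        have h1 : q (k+1) ≤ (q' k ^ 3 - 1) * q' k + 1 := by
          rw [hqk1]
          have := mul_le_mul_of_nonneg_right
            (show b (k+1) ≤ q' k ^ 3 - 1 by linarith) (show (0:ℤ) ≤ q' k by linarith)
          linarith
        rw [eb']; exact aux_lower _ _ _ B1 B3 h1
      -- D2 : b' (k+1) < q (k+1) ^ 3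
      have nD2 : b' (k+1) < q (k+1) ^ 3 := by
        have h3 : (q' k ^ 2 + q' k + 1) ^ 3 ≤ q (k+1) ^ 3 :=
          pow_le_pow_left₀ (by positivity) hq'k2 3
        rw [eb']; exact aux_upper _ _ _ B1 B2 h3
      -- D3 : q' (k+1) < b (k+2)
      have nD3 : q' (k+1) < b (k+2) := by
        have h1 : q' (k+1) ≤ (q (k+1) ^ 3 - 1) * q (k+1) + 1 := by
          rw [nC1]
          have := mul_le_mul_of_nonneg_right
            (show b' (k+1) ≤ q (k+1) ^ 3 - 1 by linarith) (show (0:ℤ) ≤ q (k+1) by linarith)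
          linarith
        rw [eb2]; exact aux_lower _ _ _ nA1 (by linarith) h1
      -- D4 : b (k+2) < q' (k+1) ^ 3
      have nD4 : b (k+2) < q' (k+1) ^ 3 := by
        have h2 : q (k+1) ^ 2 + q (k+1) + 1 ≤ q' (k+1) := by
          rw [nC1]
          have h1 : (q (k+1) + 1) * q (k+1) ≤ b' (k+1) * q (k+1) :=
            mul_le_mul_of_nonneg_right (by linarith) (by linarith)
          have e : (q (k+1) + 1) * q (k+1) = q (k+1) ^ 2 + q (k+1) := by ring
          linarith
        have h3 : (q (k+1) ^ 2 + q (k+1) + 1) ^ 3 ≤ q' (k+1) ^ 3 :=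
          pow_le_pow_left₀ (by positivity) h2 3
        rw [eb2]; exact aux_upper _ _ _ nA1 nA2 h3
      exact ⟨⟨nA1, nA2, by linarith⟩, ⟨nB1, nB2, by linarith⟩, ⟨nC1, nC2⟩,
        nD1, nD2, nD3, nD4⟩
  intro k hk
  obtain ⟨_, _, _, h⟩ := key k hk
  exact h
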